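/- Let ξ : F ⥤ A and π : E ⥤ B be cloven Grothendieck opfibrations, and let α : A ⥤ B, φ : F ⥤ E be functors with φ ⋙ π = ξ ⋙ α. Let τ_ξ ⊣ ι_ξ and τ_π ⊣ ι_π be fibered adjunctions as in the cocartesian-transport criterion (ι_ξ : F ⥤ Comma ξ (𝟭 A) sending e to (e, ξ.obj e, 𝟙), τ_ξ its fibered left adjoint, and similarly for π). Let Φ : Comma ξ (𝟭 A) ⥤ Comma π (𝟭 B) be the functor induced by (φ, α), which satisfies ι_ξ ⋙ Φ = φ ⋙ ι_π. Then (α, φ) is a cocartesian functor (φ maps strongly cocartesian morphisms to strongly cocartesian morphisms) if and only if the mate of this commutative square — the natural transformation with component at x : Comma ξ (𝟭 A) given by transposing, from τ_π.obj (Φ.obj x) to φ.obj (τ_ξ.obj x), constructed from the unit of τ_ξ ⊣ ι_ξ and the counit of τ_π ⊣ ι_π — is a natural isomorphism. -/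

import Mathlib

open CategoryTheory

universe v₁ v₂ v₃ v₄ u₁ u₂ u₃ u₄

section Defs

variable {E : Type u₁} {B : Type u₂} [Category.{v₁} E] [Category.{v₂} B]

/-- A morphism `f : e ⟶ e'` is *strongly cocartesian* for `π : E ⥤ B` if every
`h : e ⟶ e''` together with a factorization `π.map h = π.map f ≫ v` of its image
admits a unique lift `g : e' ⟶ e''` with `π.map g = v` and `f ≫ g = h`. -/
def StronglyCocartesian (π : E ⥤ B) {e e' : E} (f : e ⟶ e') : Prop :=
  ∀ {e'' : E} (h : e ⟶ e'') (v : π.obj e' ⟶ π.obj e''),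
    π.map h = π.map f ≫ v → ∃! g : e' ⟶ e'', π.map g = v ∧ f ≫ g = h

/-- A *cleavage* for `π : E ⥤ B`: for every `e : E` and `u : π.obj e ⟶ b` a chosen
strongly cocartesian lift. `π` is a cloven Grothendieck opfibration iff it admits one. -/
structure Cleavage (π : E ⥤ B) where
  obj : ∀ {b : B} (e : E), (π.obj e ⟶ b) → E
  map : ∀ {b : B} (e : E) (u : π.obj e ⟶ b), e ⟶ obj e u
  obj_proj : ∀ {b : B} (e : E) (u : π.obj e ⟶ b), π.obj (obj e u) = b
  map_proj : ∀ {b : B} (e : E) (u : π.obj e ⟶ b),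
    π.map (map e u) = u ≫ eqToHom (obj_proj e u).symm
  cocart : ∀ {b : B} (e : E) (u : π.obj e ⟶ b), StronglyCocartesian π (map e u)

/-- A fibered functor `(α, φ)` is a *cocartesian functor* if `φ` maps strongly
cocartesian morphisms to strongly cocartesian morphisms. -/
def CocartesianFunctor {F : Type u₃} {A : Type u₄} [Category.{v₃} F] [Category.{v₄} A]
    (ξ : F ⥤ A) (π : E ⥤ B) (φ : F ⥤ E) : Prop :=
  ∀ {e e' : F} (m : e ⟶ e'), StronglyCocartesian ξ m → StronglyCocartesian π (φ.map m)

/-- The inclusion `ι : E ⥤ Comma π (𝟭 B)` sending `e` to `(e, π.obj e, 𝟙 (π.obj e))`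
and `h : e ⟶ e'` to `(h, π.map h)`. -/
@[simps]
def iotaFunctor (π : E ⥤ B) : E ⥤ Comma π (𝟭 B) where
  obj e := { left := e, right := π.obj e, hom := 𝟙 (π.obj e) }
  map {e e'} h :=
    { left := h
      right := π.map h
      w := by simp }

variable {F : Type u₃} {A : Type u₄} [Category.{v₃} F] [Category.{v₄} A]

/-- The functor `Comma ξ (𝟭 A) ⥤ Comma π (𝟭 B)` induced by a fibered functor `(α, φ)`. -/
@[simps]
def commaMapFunctor (ξ : F ⥤ A) (π : E ⥤ B) (α : A ⥤ B) (φ : F ⥤ E)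
    (heq : φ ⋙ π = ξ ⋙ α) : Comma ξ (𝟭 A) ⥤ Comma π (𝟭 B) where
  obj x :=
    { left := φ.obj x.left
      right := α.obj x.right
      hom := eqToHom (Functor.congr_obj heq x.left) ≫ α.map x.hom }
  map {x y} m :=
    { left := φ.map m.left
      right := α.map m.right
      w := by
        have h := Functor.congr_hom heq m.left
        simp only [Functor.comp_map] at h
        dsimp
        rw [h]
        simp only [Category.assoc, eqToHom_trans_assoc, eqToHom_refl, Category.id_comp]
        rw [← α.map_comp, ← α.map_comp]
        have hw := m.w
        simp only [Functor.id_map] at hw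
        rw [hw] }
  map_id x := by apply CommaMorphism.ext <;> simp
  map_comp m m' := by apply CommaMorphism.ext <;> simp

end Defs

section Aux

lemma isIso_eqToHom' {C : Type*} [Category C] {X Y : C} (p : X = Y) : IsIso (eqToHom p) :=
  inferInstance

variable {E : Type u₁} {B : Type u₂} [Category.{v₁} E] [Category.{v₂} B]

/-- Composing a strongly cocartesian morphism with an isomorphism yields a strongly
cocartesian morphism. -/
lemma StronglyCocartesian.comp_iso {π : E ⥤ B} {e e₁ e₂ : E} {f : e ⟶ e₁}
    (hf : StronglyCocartesian π f) (k : e₁ ⟶ e₂) [IsIso k] :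
    StronglyCocartesian π (f ≫ k) := by
  intro e'' h v hv
  rw [π.map_comp, Category.assoc] at hv
  obtain ⟨g₁, ⟨hg₁p, hg₁c⟩, huniq⟩ := hf h (π.map k ≫ v) hv
  refine ⟨inv k ≫ g₁, ⟨?_, ?_⟩, ?_⟩
  · rw [π.map_comp, π.map_inv, hg₁p, IsIso.inv_hom_id_assoc]
  · simp only [Category.assoc, IsIso.hom_inv_id_assoc]; exact hg₁c
  · rintro g' ⟨hp, hc⟩
    have := huniq (k ≫ g') ⟨by rw [π.map_comp, hp], by rw [← Category.assoc]; exact hc⟩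
    rw [← this, IsIso.inv_hom_id_assoc]

/-- If `f` and `f ≫ k` are strongly cocartesian and `π.map k` is invertible, then
`k` is an isomorphism. -/
lemma isIso_of_stronglyCocartesian_comp {π : E ⥤ B} {e e₁ e₂ : E} {f : e ⟶ e₁}
    (hf : StronglyCocartesian π f) {k : e₁ ⟶ e₂}
    (hfk : StronglyCocartesian π (f ≫ k)) (hk : IsIso (π.map k)) : IsIso k := by
  haveI := hk
  obtain ⟨k', ⟨hk'p, hk'c⟩, _⟩ := hfk f (inv (π.map k)) (by rw [π.map_comp]; simp)
  refine ⟨k', ?_, ?_⟩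
  · obtain ⟨g, _, hu⟩ := hf f (𝟙 _) (by simp)
    have h1 := hu (k ≫ k') ⟨by rw [π.map_comp, hk'p, IsIso.hom_inv_id],
      by rw [← Category.assoc]; exact hk'c⟩
    have h2 := hu (𝟙 _) ⟨by simp, by simp⟩
    rw [h1, h2]
  · obtain ⟨g, _, hu⟩ := hfk (f ≫ k) (𝟙 _) (by simp)
    have h1 := hu (k' ≫ k) ⟨by rw [π.map_comp, hk'p, IsIso.inv_hom_id],
      by rw [← Category.assoc, hk'c]⟩
    have h2 := hu (𝟙 _) ⟨by simp, by simp⟩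
    rw [h1, h2]

/-- The left component of the unit of the transport adjunction is strongly cocartesian. -/
lemma unit_left_stronglyCocartesian (π : E ⥤ B) (τ : Comma π (𝟭 B) ⥤ E)
    (hfib : τ ⋙ π = Comma.snd π (𝟭 B)) (adj : τ ⊣ iotaFunctor π)
    (hunit : ∀ x : Comma π (𝟭 B),
      (adj.unit.app x).right = eqToHom (Functor.congr_obj hfib x).symm)
    (x : Comma π (𝟭 B)) : StronglyCocartesian π (adj.unit.app x).left := by
  have hwu : π.map (adj.unit.app x).left
      = x.hom ≫ eqToHom (Functor.congr_obj hfib x).symm := by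
    have hw := (adj.unit.app x).w
    rw [hunit x] at hw
    exact (Category.comp_id _).symm.trans hw
  intro e'' h v hv
  change x.left ⟶ e'' at h
  change π.obj (τ.obj x) ⟶ π.obj e'' at v
  show ∃! g : τ.obj x ⟶ e'', π.map g = v ∧ (adj.unit.app x).left ≫ g = h
  have hw' : π.map h ≫ ((iotaFunctor π).obj e'').hom
      = x.hom ≫ (𝟭 B).map (eqToHom (Functor.congr_obj hfib x).symm ≫ v) := by
    simp only [iotaFunctor_obj_hom, Category.comp_id, Functor.id_map]
    rw [hv, hwu]
    exact (Category.comp_id _).trans (Category.assoc _ _ _)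
  let f : x ⟶ (iotaFunctor π).obj e'' :=
    { left := h, right := eqToHom (Functor.congr_obj hfib x).symm ≫ v, w := hw' }
  have hfg : adj.unit.app x ≫ (iotaFunctor π).map ((adj.homEquiv x e'').symm f) = f := by
    have h0 := (adj.homEquiv x e'').apply_symm_apply f
    rwa [Adjunction.homEquiv_unit] at h0
  have hl := congrArg CommaMorphism.left hfg
  have hr := congrArg CommaMorphism.right hfg
  simp only [Comma.comp_left, Comma.comp_right, iotaFunctor_map_left, iotaFunctor_map_right,
    hunit x] at hl hr
  have hpg : π.map ((adj.homEquiv x e'').symm f) = v := by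
    have : eqToHom (Functor.congr_obj hfib x).symm ≫ π.map ((adj.homEquiv x e'').symm f)
        = eqToHom (Functor.congr_obj hfib x).symm ≫ v := hr
    rwa [cancel_epi] at this
  refine ⟨(adj.homEquiv x e'').symm f, ⟨hpg, hl⟩, ?_⟩
  rintro g' ⟨hp', hc'⟩
  have hfeq : adj.homEquiv x e'' g' = f := by
    rw [Adjunction.homEquiv_unit]
    apply CommaMorphism.ext
    · exact hc'
    · simp [hunit x, hp']
      rfl
  have := congrArg (adj.homEquiv x e'').symm hfeq
  simpa using this

end Aux

/-- **Characterization of cocartesian functors via the fibered mate of the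
transport adjunctions.** Let `ξ : F ⥤ A` and `π : E ⥤ B` be cloven Grothendieck
opfibrations, `(α, φ)` a fibered functor with `φ ⋙ π = ξ ⋙ α`, and `τ_ξ ⊣ ι_ξ`,
`τ_π ⊣ ι_π` fibered adjunctions as in the cocartesian-transport criterion. Then
`(α, φ)` is a cocartesian functor iff the mate of the commutative square
`ι_ξ ⋙ Φ = φ ⋙ ι_π` is a natural isomorphism, i.e. iff each of its components —
obtained by transposing via the unit of `τ_ξ ⊣ ι_ξ` and the counit of `τ_π ⊣ ι_π` —
is an isomorphism. -/
theorem cocartesianFunctor_iff_transport_mate_isIso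
    {F : Type u₁} {A : Type u₂} {E : Type u₃} {B : Type u₄}
    [Category.{v₁} F] [Category.{v₂} A] [Category.{v₃} E] [Category.{v₄} B]
    (ξ : F ⥤ A) (π : E ⥤ B) (α : A ⥤ B) (φ : F ⥤ E)
    (cξ : Cleavage ξ) (cπ : Cleavage π)
    (heq : φ ⋙ π = ξ ⋙ α)
    (τξ : Comma ξ (𝟭 A) ⥤ F) (hfibξ : τξ ⋙ ξ = Comma.snd ξ (𝟭 A))
    (adjξ : τξ ⊣ iotaFunctor ξ)
    (hunitξ : ∀ x : Comma ξ (𝟭 A),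
      (adjξ.unit.app x).right = eqToHom (Functor.congr_obj hfibξ x).symm)
    (τπ : Comma π (𝟭 B) ⥤ E) (hfibπ : τπ ⋙ π = Comma.snd π (𝟭 B))
    (adjπ : τπ ⊣ iotaFunctor π)
    (hunitπ : ∀ x : Comma π (𝟭 B),
      (adjπ.unit.app x).right = eqToHom (Functor.congr_obj hfibπ x).symm)
    (hsq : iotaFunctor ξ ⋙ commaMapFunctor ξ π α φ heq = φ ⋙ iotaFunctor π) :
    CocartesianFunctor ξ π φ ↔
      ∀ x : Comma ξ (𝟭 A),
        IsIso
          (τπ.map ((commaMapFunctor ξ π α φ heq).map (adjξ.unit.app x) ≫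
              eqToHom (Functor.congr_obj hsq (τξ.obj x))) ≫
            adjπ.counit.app (φ.obj (τξ.obj x))) := by
  have key : ∀ x : Comma ξ (𝟭 A),
      (adjπ.unit.app ((commaMapFunctor ξ π α φ heq).obj x)).left ≫
        (τπ.map ((commaMapFunctor ξ π α φ heq).map (adjξ.unit.app x) ≫
            eqToHom (Functor.congr_obj hsq (τξ.obj x))) ≫
          adjπ.counit.app (φ.obj (τξ.obj x)))
        = φ.map (adjξ.unit.app x).left := by
    intro x
    have h1 : adjπ.unit.app ((commaMapFunctor ξ π α φ heq).obj x) ≫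
        (iotaFunctor π).map (τπ.map ((commaMapFunctor ξ π α φ heq).map (adjξ.unit.app x) ≫
            eqToHom (Functor.congr_obj hsq (τξ.obj x))) ≫
          adjπ.counit.app (φ.obj (τξ.obj x)))
        = (commaMapFunctor ξ π α φ heq).map (adjξ.unit.app x) ≫
            eqToHom (Functor.congr_obj hsq (τξ.obj x)) := by
      have h0 := (adjπ.homEquiv ((commaMapFunctor ξ π α φ heq).obj x)
        (φ.obj (τξ.obj x))).apply_symm_apply
        ((commaMapFunctor ξ π α φ heq).map (adjξ.unit.app x) ≫
          eqToHom (Functor.congr_obj hsq (τξ.obj x)))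
      rwa [Adjunction.homEquiv_counit, Adjunction.homEquiv_unit] at h0
    have h2 := congrArg CommaMorphism.left h1
    simp only [Comma.comp_left, iotaFunctor_map_left, commaMapFunctor_map_left,
      Comma.eqToHom_left, iotaFunctor_obj_left, commaMapFunctor_obj_left,
      eqToHom_refl, Category.comp_id] at h2
    exact h2.trans (Category.comp_id _)
  have baseIso : ∀ x : Comma ξ (𝟭 A),
      IsIso (π.map (τπ.map ((commaMapFunctor ξ π α φ heq).map (adjξ.unit.app x) ≫
            eqToHom (Functor.congr_obj hsq (τξ.obj x))) ≫
          adjπ.counit.app (φ.obj (τξ.obj x)))) := by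
    intro x
    rw [π.map_comp]
    have hc : IsIso (π.map (adjπ.counit.app (φ.obj (τξ.obj x)))) := by
      have ht := congrArg CommaMorphism.right
        (adjπ.right_triangle_components (φ.obj (τξ.obj x)))
      simp only [Comma.comp_right, iotaFunctor_map_right, Comma.id_right,
        hunitπ] at ht
      rw [← @IsIso.inv_eq_of_hom_inv_id _ _ _ _ _ (isIso_eqToHom' _) _ ht]
      exact @IsIso.inv_isIso _ _ _ _ _ (isIso_eqToHom' _)
    have hm : IsIso (π.map (τπ.map ((commaMapFunctor ξ π α φ heq).map (adjξ.unit.app x) ≫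
        eqToHom (Functor.congr_obj hsq (τξ.obj x))))) := by
      have hh := Functor.congr_hom hfibπ ((commaMapFunctor ξ π α φ heq).map (adjξ.unit.app x) ≫
        eqToHom (Functor.congr_obj hsq (τξ.obj x)))
      simp only [Functor.comp_map] at hh
      rw [hh]
      haveI : IsIso ((Comma.snd π (𝟭 B)).map
          ((commaMapFunctor ξ π α φ heq).map (adjξ.unit.app x) ≫
            eqToHom (Functor.congr_obj hsq (τξ.obj x)))) := by
        simp only [Comma.snd_map, Comma.comp_right, commaMapFunctor_map_right,
          Comma.eqToHom_right, hunitξ, eqToHom_map, eqToHom_trans]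
        exact IsIso.comp_isIso' (@Functor.map_isIso _ _ _ _ _ _ α _ (isIso_eqToHom' _)) (isIso_eqToHom' _)
      infer_instance
    haveI := hc
    haveI := hm
    infer_instance
  have scξ := unit_left_stronglyCocartesian ξ τξ hfibξ adjξ hunitξ
  have scπ := unit_left_stronglyCocartesian π τπ hfibπ adjπ hunitπ
  constructor
  · intro hcoc x
    exact isIso_of_stronglyCocartesian_comp
      (scπ ((commaMapFunctor ξ π α φ heq).obj x))
      (by erw [key x]; exact hcoc (adjξ.unit.app x).left (scξ x)) (baseIso x)
  · intro hiso e e' m hm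
    let x : Comma ξ (𝟭 A) := { left := e, right := ξ.obj e', hom := ξ.map m }
    have hwu : ξ.map (adjξ.unit.app x).left
        = ξ.map m ≫ eqToHom (Functor.congr_obj hfibξ x).symm := by
      have hw := (adjξ.unit.app x).w
      rw [hunitξ x] at hw
      exact (Category.comp_id _).symm.trans hw
    obtain ⟨j, ⟨hjp, hjc⟩, _⟩ := scξ x m (eqToHom (Functor.congr_obj hfibξ x))
      (by erw [hwu, Category.assoc, eqToHom_trans, eqToHom_refl, Category.comp_id])
    haveI : IsIso (ξ.map j) := by rw [hjp]; exact isIso_eqToHom' _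
    haveI hjiso : IsIso j := isIso_of_stronglyCocartesian_comp (scξ x)
      (by rw [hjc]; exact hm) ‹_›
    haveI := hiso x
    have hfm : φ.map m = (adjπ.unit.app ((commaMapFunctor ξ π α φ heq).obj x)).left ≫
        ((τπ.map ((commaMapFunctor ξ π α φ heq).map (adjξ.unit.app x) ≫
            eqToHom (Functor.congr_obj hsq (τξ.obj x))) ≫
          adjπ.counit.app (φ.obj (τξ.obj x))) ≫ φ.map j) := by
      rw [← Category.assoc, key x, ← hjc, φ.map_comp]
      rfl
    rw [hfm]
    intro e'' h v hv
    exact @StronglyCocartesian.comp_iso _ _ _ _ _ _ _ _ _ (scπ ((commaMapFunctor ξ π α φ heq).obj x))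
      ((τπ.map ((commaMapFunctor ξ π α φ heq).map (adjξ.unit.app x) ≫
            eqToHom (Functor.congr_obj hsq (τξ.obj x))) ≫
          adjπ.counit.app (φ.obj (τξ.obj x))) ≫ φ.map j)
      (IsIso.comp_isIso' (hiso x) (Functor.map_isIso φ j)) _ h v hv
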